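/- Let A and B be ω-categorical homogeneous relational structures with countably infinite domain Ω, and let C and D be first-order reducts of A and B respectively in the same relational signature τ. Then the following are equivalent: (1) there exists a bijection θ: Ω → Ω that is an isomorphism from C onto D and is a fo-bi-definition of A and B (θ and θ⁻¹ map sets first-order definable without parameters onto sets first-order definable without parameters); (2) there exist injective functions f, g: Ω → Ω such that (i) f is (A,B)-canonical, (ii) g is (B,A)-canonical, (iii) g∘f maps every Aut(A)-orbit of tuples into itself, (iv) f∘g maps every Aut(B)-orbit of tuples into itself, and for every relation symbol R ∈ τ, (v) f maps every Aut(A)-orbit contained in R^C into R^D, and (vi) g maps every Aut(B)-orbit contained in R^D into R^C. -/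

import Mathlib

/-- The topology of pointwise convergence on functions `α → β`
(product topology with `β` discrete). -/
def FnTop (α β : Type*) : TopologicalSpace (α → β) :=
  @Pi.topologicalSpace α (fun _ => β) (fun _ => ⊥)

/-- The coordinatewise action of a permutation on tuples. -/
def tAct {Ω : Type*} (g : Equiv.Perm Ω) {n : ℕ} (u : Fin n → Ω) : Fin n → Ω :=
  fun i => g (u i)

/-- The action of a permutation on sets of tuples. -/
def sAct {Ω : Type*} (g : Equiv.Perm Ω) {n : ℕ} (c : Set (Fin n → Ω)) : Set (Fin n → Ω) :=
  tAct g '' c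

/-- A set of permutations is oligomorphic if for every `n` its coordinatewise
action on `n`-tuples has finitely many orbits. -/
def Oligo {Ω : Type*} (G : Set (Equiv.Perm Ω)) : Prop :=
  ∀ n : ℕ, Set.Finite {o : Set (Fin n → Ω) | ∃ t : Fin n → Ω, o = {s | ∃ g ∈ G, s = tAct g t}}

/-- `G` acts without algebraicity on `Ω`: if the orbit of `a` under the pointwise
stabiliser of a finite tuple `y` is finite, then `a` is an entry of `y`. -/
def NoAlg {Ω : Type*} (G : Set (Equiv.Perm Ω)) : Prop :=
  ∀ (m : ℕ) (y : Fin m → Ω) (a : Ω),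
    Set.Finite {b : Ω | ∃ g ∈ G, (∀ i, g (y i) = y i) ∧ b = g a} → ∃ i, a = y i

/-- `G` is topologically closed in the space of permutations with the topology of
pointwise convergence. -/
def TopClosedPerm {Ω : Type*} (G : Set (Equiv.Perm Ω)) : Prop :=
  @IsClosed (Ω → Ω) (FnTop Ω Ω) {f | ∃ g ∈ G, f = ⇑g}

/-- The `r`-equivalence class of a tuple `u ∈ U`. -/
def cls {Ω : Type*} {n : ℕ} (U : Set (Fin n → Ω))
    (r : (Fin n → Ω) → (Fin n → Ω) → Prop) (u : Fin n → Ω) : Set (Fin n → Ω) :=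
  {v ∈ U | r u v}

/-- The quotient `B = U/∼`, realised as the set of equivalence classes. -/
def classes {Ω : Type*} {n : ℕ} (U : Set (Fin n → Ω))
    (r : (Fin n → Ω) → (Fin n → Ω) → Prop) : Set (Set (Fin n → Ω)) :=
  {c | ∃ u ∈ U, c = cls U r u}

/-- `a` entangles the class `c` if `a` is an entry of every tuple in `c`. -/
def Entangles {Ω : Type*} {n : ℕ} (a : Ω) (c : Set (Fin n → Ω)) : Prop :=
  ∀ v ∈ c, ∃ i, v i = a

/-- `a` strongly entangles `c ∈ B` if it entangles `c` and no other element of `B`. -/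
def StronglyEntangles {Ω : Type*} {n : ℕ} (B : Set (Set (Fin n → Ω))) (a : Ω)
    (c : Set (Fin n → Ω)) : Prop :=
  Entangles a c ∧ ∀ c' ∈ B, Entangles a c' → c' = c

/-- `a` is algebraic over `c`: the orbit of `a` under the stabiliser `G_c` is finite. -/
def AlgebraicOver {Ω : Type*} {n : ℕ} (G : Set (Equiv.Perm Ω)) (a : Ω)
    (c : Set (Fin n → Ω)) : Prop :=
  Set.Finite {b : Ω | ∃ g ∈ G, sAct g c = c ∧ b = g a}

/-- `B` is dense: for every `a ∈ Ω` there are `c₁,…,c_k ∈ B` whose joint stabiliser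
is contained in the stabiliser of `a`. -/
def DenseClasses {Ω : Type*} {n : ℕ} (G : Set (Equiv.Perm Ω))
    (B : Set (Set (Fin n → Ω))) : Prop :=
  ∀ a : Ω, ∃ (k : ℕ) (cc : Fin k → Set (Fin n → Ω)),
    (∀ i, cc i ∈ B) ∧ ∀ g ∈ G, (∀ i, sAct g (cc i) = cc i) → g a = a

/-- The induced action of `G` on `B` is without algebraicity. -/
def NoAlgOn {Ω : Type*} {n : ℕ} (G : Set (Equiv.Perm Ω))
    (B : Set (Set (Fin n → Ω))) : Prop :=
  ∀ (m : ℕ) (cc : Fin m → Set (Fin n → Ω)) (c : Set (Fin n → Ω)),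
    (∀ i, cc i ∈ B) → c ∈ B →
    Set.Finite {c' | ∃ g ∈ G, (∀ i, sAct g (cc i) = cc i) ∧ c' = sAct g c} →
    ∃ i, c = cc i

open FirstOrder Language Structure in
/-- A permutation is an automorphism of the `L`-structure `Ω` if it preserves
every relation and its complement. -/
def IsAutPerm (L : FirstOrder.Language) (Ω : Type*) [L.Structure Ω] (g : Equiv.Perm Ω) : Prop :=
  ∀ (n : ℕ) (R : L.Relations n) (t : Fin n → Ω), RelMap R (⇑g ∘ t) ↔ RelMap R t

open FirstOrder Language Structure in
/-- The automorphism group of the `L`-structure `Ω`, as a subgroup of `Equiv.Perm Ω`. -/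
def autGroup (L : FirstOrder.Language) (Ω : Type*) [L.Structure Ω] : Subgroup (Equiv.Perm Ω) where
  carrier := {g | IsAutPerm L Ω g}
  one_mem' := by
    intro n R t
    exact Iff.rfl
  mul_mem' := by
    intro a b ha hb n R t
    have h1 : ⇑(a * b) ∘ t = ⇑a ∘ (⇑b ∘ t) := by
      ext i; simp [Equiv.Perm.mul_apply]
    rw [h1]
    exact (ha n R (⇑b ∘ t)).trans (hb n R t)
  inv_mem' := by
    intro a ha n R t
    have h := ha n R (⇑a⁻¹ ∘ t)
    have h2 : ⇑a ∘ (⇑a⁻¹ ∘ t) = t := by ext i; simp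
    rw [h2] at h
    exact h.symm

/-- The topology of pointwise convergence on the automorphism group. -/
def autTop (L : FirstOrder.Language) (Ω : Type*) [L.Structure Ω] :
    TopologicalSpace (autGroup L Ω) :=
  TopologicalSpace.induced (fun g => ((g : Equiv.Perm Ω) : Ω → Ω)) (FnTop Ω Ω)

/-- A subset of `Ω^n` is first-order definable without parameters in the
`L`-structure `Ω`. -/
def FoDef (L : FirstOrder.Language) (Ω : Type*) [L.Structure Ω] {n : ℕ}
    (s : Set (Fin n → Ω)) : Prop :=
  ∃ φ : L.Formula (Fin n), s = {t | φ.Realize t}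

/-- `t'` lies in the `G`-orbit of `t`. -/
def SameOrb {Ω : Type*} (G : Set (Equiv.Perm Ω)) {m : ℕ} (t t' : Fin m → Ω) : Prop :=
  ∃ g ∈ G, t' = tAct g t

/-- `f` is canonical from the structure with automorphism set `G` to the structure
with automorphism set `H`: it maps `G`-orbits of tuples into `H`-orbits. -/
def Canonical {Ω Ω' : Type*} (G : Set (Equiv.Perm Ω)) (H : Set (Equiv.Perm Ω'))
    (f : Ω → Ω') : Prop :=
  ∀ (m : ℕ) (t t' : Fin m → Ω), SameOrb G t t' →
    SameOrb H (fun i => f (t i)) (fun i => f (t' i))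

open FirstOrder Language Structure in
/-- A structure is homogeneous if every isomorphism between finite induced
substructures extends to an automorphism. -/
def Homog (L : FirstOrder.Language) (Ω : Type*) [L.Structure Ω] : Prop :=
  ∀ (s : Finset Ω) (f : Ω → Ω), Set.InjOn f ↑s →
    (∀ (n : ℕ) (R : L.Relations n) (t : Fin n → Ω), (∀ i, t i ∈ s) →
      (RelMap R t ↔ RelMap R (f ∘ t))) →
    ∃ g : Equiv.Perm Ω, IsAutPerm L Ω g ∧ ∀ x ∈ s, g x = f x

open FirstOrder Language Structure in
/-- Interpretation of a relation symbol in an explicitly given structure. -/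
def relI {τ : FirstOrder.Language} {Ω : Type*} (S : τ.Structure Ω) {m : ℕ}
    (R : τ.Relations m) (t : Fin m → Ω) : Prop :=
  @RelMap τ Ω S m R t

section Helpers

open FirstOrder Language Structure

variable {Ω : Type*} {L : FirstOrder.Language} [L.Structure Ω]

lemma autOne : IsAutPerm L Ω 1 := fun _ _ _ => Iff.rfl

lemma autMul {a b : Equiv.Perm Ω} (ha : IsAutPerm L Ω a) (hb : IsAutPerm L Ω b) :
    IsAutPerm L Ω (a * b) := by
  intro n R t
  have h1 : ⇑(a * b) ∘ t = ⇑a ∘ (⇑b ∘ t) := by ext i; simp [Equiv.Perm.mul_apply]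
  rw [h1]
  exact (ha n R (⇑b ∘ t)).trans (hb n R t)

lemma autInv {a : Equiv.Perm Ω} (ha : IsAutPerm L Ω a) : IsAutPerm L Ω a⁻¹ := by
  intro n R t
  have h := ha n R (⇑a⁻¹ ∘ t)
  have h2 : ⇑a ∘ (⇑a⁻¹ ∘ t) = t := by ext i; simp
  rw [h2] at h
  exact h.symm

lemma tAct_one {n : ℕ} (t : Fin n → Ω) : tAct (1 : Equiv.Perm Ω) t = t := by
  funext i; simp [tAct]

lemma tAct_mul (a b : Equiv.Perm Ω) {n : ℕ} (t : Fin n → Ω) :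
    tAct a (tAct b t) = tAct (a * b) t := by
  funext i; simp [tAct, Equiv.Perm.mul_apply]

lemma sameOrb_refl {n : ℕ} (t : Fin n → Ω) :
    SameOrb {g : Equiv.Perm Ω | IsAutPerm L Ω g} t t :=
  ⟨1, autOne, (tAct_one t).symm⟩

lemma sameOrb_symm {n : ℕ} {t t' : Fin n → Ω}
    (h : SameOrb {g : Equiv.Perm Ω | IsAutPerm L Ω g} t t') :
    SameOrb {g : Equiv.Perm Ω | IsAutPerm L Ω g} t' t := by
  obtain ⟨g, hg, rfl⟩ := h
  exact ⟨g⁻¹, autInv hg, by rw [tAct_mul, inv_mul_cancel, tAct_one]⟩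

lemma sameOrb_trans {n : ℕ} {t t' t'' : Fin n → Ω}
    (h : SameOrb {g : Equiv.Perm Ω | IsAutPerm L Ω g} t t')
    (h' : SameOrb {g : Equiv.Perm Ω | IsAutPerm L Ω g} t' t'') :
    SameOrb {g : Equiv.Perm Ω | IsAutPerm L Ω g} t t'' := by
  obtain ⟨g, hg, rfl⟩ := h
  obtain ⟨g', hg', rfl⟩ := h'
  exact ⟨g' * g, autMul hg' hg, (tAct_mul g' g t).symm⟩

lemma sameOrb_comp {n m : ℕ} {t t' : Fin n → Ω} {G : Set (Equiv.Perm Ω)}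
    (h : SameOrb G t t') (j : Fin m → Fin n) :
    SameOrb G (t ∘ j) (t' ∘ j) := by
  obtain ⟨g, hg, rfl⟩ := h
  exact ⟨g, hg, rfl⟩

/-- An automorphism as a first-order language equivalence. -/
noncomputable def autLEquiv [L.IsRelational] {g : Equiv.Perm Ω} (h : IsAutPerm L Ω g) :
    Ω ≃[L] Ω where
  toEquiv := g
  map_fun' := fun f _ => isEmptyElim f
  map_rel' := fun r x => h _ r x

lemma realize_tAct_iff [L.IsRelational] {g : Equiv.Perm Ω} (h : IsAutPerm L Ω g)
    {n : ℕ} (φ : L.Formula (Fin n)) (t : Fin n → Ω) :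
    φ.Realize (tAct g t) ↔ φ.Realize t := by
  have h2 : tAct g t = ⇑(autLEquiv h) ∘ t := rfl
  rw [h2]
  exact FirstOrder.Language.StrongHomClass.realize_formula (autLEquiv h) φ

end Helpers
section Helpers2

open FirstOrder Language Structure

variable {Ω : Type*} {L : FirstOrder.Language} [L.Structure Ω]

lemma sameOrb_of_qfEquiv [L.IsRelational] (hHomog : Homog L Ω) {m : ℕ} (t t' : Fin m → Ω)
    (heq : ∀ i j, t i = t j ↔ t' i = t' j)
    (hrel : ∀ (k : ℕ) (R : L.Relations k) (jm : Fin k → Fin m),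
      RelMap R (t ∘ jm) ↔ RelMap R (t' ∘ jm)) :
    SameOrb {g : Equiv.Perm Ω | IsAutPerm L Ω g} t t' := by
  classical
  set s : Finset Ω := Finset.image t Finset.univ with hs
  set F : Ω → Ω := fun x => if h : ∃ i, t i = x then t' h.choose else x with hFdef
  have hF : ∀ i, F (t i) = t' i := by
    intro i
    have h : ∃ j, t j = t i := ⟨i, rfl⟩
    simp only [hFdef, dif_pos h]
    exact (heq h.choose i).1 h.choose_spec
  have hinj : Set.InjOn F ↑s := by
    intro x hx y hy hxy
    obtain ⟨i, -, rfl⟩ := Finset.mem_image.1 hx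
    obtain ⟨j, -, rfl⟩ := Finset.mem_image.1 hy
    rw [hF, hF] at hxy
    exact (heq i j).2 hxy
  have hpres : ∀ (k : ℕ) (R : L.Relations k) (u : Fin k → Ω), (∀ i, u i ∈ s) →
      (RelMap R u ↔ RelMap R (F ∘ u)) := by
    intro k R u hu
    have h1 : ∀ i, ∃ j, t j = u i := by
      intro i
      obtain ⟨j, -, hj⟩ := Finset.mem_image.1 (hu i)
      exact ⟨j, hj⟩
    choose jm hjm using h1
    have hu' : u = t ∘ jm := funext fun i => (hjm i).symm
    have hFu : F ∘ u = t' ∘ jm := by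
      funext i
      have : u i = t (jm i) := (hjm i).symm
      simp only [Function.comp_apply, this, hF]
    rw [hFu, hu']
    exact hrel k R jm
  obtain ⟨g, hg, hgs⟩ := hHomog s F hinj hpres
  refine ⟨g, hg, funext fun i => ?_⟩
  have : g (t i) = F (t i) := hgs (t i) (Finset.mem_image.2 ⟨i, Finset.mem_univ i, rfl⟩)
  rw [show tAct g t i = g (t i) from rfl, this, hF]

lemma exists_sep_formula [L.IsRelational] (hHomog : Homog L Ω) {m : ℕ} {t t' : Fin m → Ω}
    (h : ¬ SameOrb {g : Equiv.Perm Ω | IsAutPerm L Ω g} t t') :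
    ∃ φ : L.Formula (Fin m), φ.Realize t ∧ ¬ φ.Realize t' := by
  by_contra hc
  push_neg at hc
  have hiff : ∀ φ : L.Formula (Fin m), φ.Realize t ↔ φ.Realize t' := by
    intro φ
    refine ⟨hc φ, fun h2 => ?_⟩
    by_contra h3
    exact Formula.realize_not.1 (hc φ.not (Formula.realize_not.2 h3)) h2
  apply h
  apply sameOrb_of_qfEquiv hHomog
  · intro i j
    have := hiff (Term.equal (Term.var i) (Term.var j))
    simpa [Formula.realize_equal] using this
  · intro k R jm
    have := hiff (R.formula (fun i => Term.var (jm i)))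
    simpa [Formula.realize_rel, Function.comp_def] using this

lemma mem_orbit_self {n : ℕ} {G : Set (Equiv.Perm Ω)} (h1 : (1 : Equiv.Perm Ω) ∈ G)
    (t : Fin n → Ω) : t ∈ {s | ∃ g ∈ G, s = tAct g t} :=
  ⟨1, h1, (tAct_one t).symm⟩

/-- Every orbit of tuples is first-order definable, assuming homogeneity and
oligomorphicity. -/
lemma orbit_foDef [L.IsRelational] (hHomog : Homog L Ω)
    (hOligo : Oligo {g : Equiv.Perm Ω | IsAutPerm L Ω g}) {m : ℕ} (t : Fin m → Ω) :
    FoDef L Ω {t' | SameOrb {g : Equiv.Perm Ω | IsAutPerm L Ω g} t t'} := by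
  classical
  set G : Set (Equiv.Perm Ω) := {g : Equiv.Perm Ω | IsAutPerm L Ω g} with hG
  set OS : Finset (Set (Fin m → Ω)) := (hOligo m).toFinset with hOS
  set S : Finset (Set (Fin m → Ω)) := OS.filter (fun o => t ∉ o) with hSdef
  have hsep : ∀ o : S, ∃ φ : L.Formula (Fin m),
      φ.Realize t ∧ ∀ v ∈ (o : Set (Fin m → Ω)), ¬ φ.Realize v := by
    rintro ⟨o, ho⟩
    rw [hSdef, Finset.mem_filter, hOS, Set.Finite.mem_toFinset] at ho
    obtain ⟨⟨u, rfl⟩, hto⟩ := ho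
    have hns : ¬ SameOrb G t u := by
      rintro ⟨g, hg, rfl⟩
      exact hto ⟨g⁻¹, autInv hg, by rw [tAct_mul, inv_mul_cancel, tAct_one]⟩
    obtain ⟨φ, hφt, hφu⟩ := exists_sep_formula hHomog hns
    refine ⟨φ, hφt, ?_⟩
    rintro v ⟨g, hg, rfl⟩
    rw [realize_tAct_iff hg]
    exact hφu
  choose φ hφt hφn using hsep
  refine ⟨BoundedFormula.iInf (fun o : S => φ o), ?_⟩
  ext t'
  simp only [Set.mem_setOf_eq, Formula.Realize, BoundedFormula.realize_iInf,
    Finset.mem_attach, true_implies]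
  constructor
  · rintro ⟨g, hg, rfl⟩ o
    exact (realize_tAct_iff hg (φ o) t).2 (hφt o)
  · intro hall
    by_contra hns
    have ho' : {s | ∃ g ∈ G, s = tAct g t'} ∈ S := by
      rw [hSdef, Finset.mem_filter, hOS, Set.Finite.mem_toFinset]
      refine ⟨⟨t', rfl⟩, ?_⟩
      rintro ⟨g, hg, hgt⟩
      exact hns ⟨g⁻¹, autInv hg, by rw [hgt, tAct_mul, inv_mul_cancel, tAct_one]⟩
    have := hφn ⟨_, ho'⟩ t' (⟨1, autOne, (tAct_one t').symm⟩)
    exact this (hall ⟨_, ho'⟩)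

/-- Every invariant set of tuples is first-order definable, assuming homogeneity
and oligomorphicity. -/
lemma foDef_of_invariant [L.IsRelational] (hHomog : Homog L Ω)
    (hOligo : Oligo {g : Equiv.Perm Ω | IsAutPerm L Ω g}) {m : ℕ} (s : Set (Fin m → Ω))
    (hinv : ∀ g : Equiv.Perm Ω, IsAutPerm L Ω g → ∀ t ∈ s, tAct g t ∈ s) :
    FoDef L Ω s := by
  classical
  set G : Set (Equiv.Perm Ω) := {g : Equiv.Perm Ω | IsAutPerm L Ω g} with hG
  set OS : Finset (Set (Fin m → Ω)) := (hOligo m).toFinset with hOS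
  set S : Finset (Set (Fin m → Ω)) := OS.filter (fun o => (o ∩ s).Nonempty) with hSdef
  have hrep : ∀ o : S, ∃ w ∈ s, (o : Set (Fin m → Ω)) = {v | SameOrb G w v} := by
    rintro ⟨o, ho⟩
    rw [hSdef, Finset.mem_filter, hOS, Set.Finite.mem_toFinset] at ho
    obtain ⟨⟨u, rfl⟩, w, ⟨⟨g, hg, rfl⟩, hws⟩⟩ := ho
    refine ⟨tAct g u, hws, ?_⟩
    ext v
    constructor
    · rintro ⟨g', hg', rfl⟩
      exact ⟨g' * g⁻¹, autMul hg' (autInv hg), by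
        rw [tAct_mul, mul_assoc, inv_mul_cancel, mul_one]⟩
    · rintro ⟨g', hg', rfl⟩
      exact ⟨g' * g, autMul hg' hg, (tAct_mul g' g u).symm⟩
  choose w hws horb using hrep
  have hdef : ∀ o : S, ∃ φ : L.Formula (Fin m),
      {v | SameOrb G (w o) v} = {v | φ.Realize v} := fun o =>
    orbit_foDef hHomog hOligo (w o)
  choose φ hφ using hdef
  refine ⟨BoundedFormula.iSup (fun o : S => φ o), ?_⟩
  ext v
  simp only [Set.mem_setOf_eq, Formula.Realize, BoundedFormula.realize_iSup,
    Finset.mem_attach, true_and]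
  constructor
  · intro hv
    have ho : {u | ∃ g ∈ G, u = tAct g v} ∈ S := by
      rw [hSdef, Finset.mem_filter, hOS, Set.Finite.mem_toFinset]
      exact ⟨⟨v, rfl⟩, v, ⟨1, autOne, (tAct_one v).symm⟩, hv⟩
    refine ⟨⟨_, ho⟩, ?_⟩
    have hvmem : v ∈ {u | SameOrb G (w ⟨_, ho⟩) u} := by
      rw [← horb ⟨_, ho⟩]
      exact ⟨1, autOne, (tAct_one v).symm⟩
    have := hφ ⟨_, ho⟩
    rw [Set.ext_iff] at this
    exact (this v).1 hvmem
  · rintro ⟨o, hov⟩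
    have : v ∈ {u | SameOrb G (w o) u} := by
      have := hφ o
      rw [Set.ext_iff] at this
      exact (this v).2 hov
    obtain ⟨g, hg, rfl⟩ := this
    exact hinv g hg (w o) (hws o)

lemma invariant_of_foDef [L.IsRelational] {m : ℕ} {s : Set (Fin m → Ω)}
    (h : FoDef L Ω s) :
    ∀ g : Equiv.Perm Ω, IsAutPerm L Ω g → ∀ t ∈ s, tAct g t ∈ s := by
  obtain ⟨φ, rfl⟩ := h
  intro g hg t ht
  exact Set.mem_setOf_eq ▸ (realize_tAct_iff hg φ t).2 ht

end Helpers2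
section Helpers3

open FirstOrder Language Structure

lemma snoc_inj {α : Type*} {n : ℕ} {a : Fin n → α} {x : α} (ha : Function.Injective a)
    (hx : x ∉ Set.range a) : Function.Injective (Fin.snoc a x : Fin (n+1) → α) := by
  intro i j hij
  rcases Fin.eq_castSucc_or_eq_last i with ⟨i', rfl⟩ | rfl <;>
    rcases Fin.eq_castSucc_or_eq_last j with ⟨j', rfl⟩ | rfl
  · simp only [Fin.snoc_castSucc] at hij
    exact congrArg Fin.castSucc (ha hij)
  · simp only [Fin.snoc_castSucc, Fin.snoc_last] at hij
    exact absurd ⟨i', hij⟩ hx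
  · simp only [Fin.snoc_castSucc, Fin.snoc_last] at hij
    exact absurd ⟨j', hij.symm⟩ hx
  · rfl

variable {Ω : Type} [Countable Ω] [Infinite Ω]
variable {L₁ L₂ : FirstOrder.Language} [L₁.Structure Ω] [L₂.Structure Ω]

/-- The invariant of the back-and-forth construction: `a` is injective and `b` lies in
the same `Aut(B)`-orbit as `f ∘ a`. -/
def GoodBF (L₂ : FirstOrder.Language) [L₂.Structure Ω] (f : Ω → Ω) (n : ℕ)
    (a b : Fin n → Ω) : Prop :=
  Function.Injective a ∧
    SameOrb {g' : Equiv.Perm Ω | IsAutPerm L₂ Ω g'} (fun i => f (a i)) b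

/-- Back-and-forth: from canonical functions `f`, `g` we obtain a bijection `θ`
with `θ ∘ t` in the same `Aut(B)`-orbit as `f ∘ t` for every tuple `t`. -/
lemma exists_theta (f g : Ω → Ω) (hfinj : Function.Injective f) (hginj : Function.Injective g)
    (hfcan : Canonical {g' : Equiv.Perm Ω | IsAutPerm L₁ Ω g'}
      {g' : Equiv.Perm Ω | IsAutPerm L₂ Ω g'} f)
    (hgcan : Canonical {g' : Equiv.Perm Ω | IsAutPerm L₂ Ω g'}
      {g' : Equiv.Perm Ω | IsAutPerm L₁ Ω g'} g)
    (hgf : ∀ (m : ℕ) (t : Fin m → Ω),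
      SameOrb {g' : Equiv.Perm Ω | IsAutPerm L₁ Ω g'} t (fun i => g (f (t i))))
    (hfg : ∀ (m : ℕ) (t : Fin m → Ω),
      SameOrb {g' : Equiv.Perm Ω | IsAutPerm L₂ Ω g'} t (fun i => f (g (t i)))) :
    ∃ θ : Ω ≃ Ω, ∀ (m : ℕ) (t : Fin m → Ω),
      SameOrb {g' : Equiv.Perm Ω | IsAutPerm L₂ Ω g'}
        (fun i => f (t i)) (fun i => θ (t i)) := by
  classical
  obtain ⟨dΩ⟩ := nonempty_denumerable Ω
  let e : Ω ≃ ℕ := Denumerable.eqv Ω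
  have good0 : GoodBF L₂ f 0 Fin.elim0 Fin.elim0 :=
    ⟨fun i => i.elim0, ⟨1, autOne, funext fun i => i.elim0⟩⟩
  have fresh : ∀ (n : ℕ) (a : Fin n → Ω), ∃ x, x ∉ Set.range a := by
    intro n a
    obtain ⟨x, hx⟩ := (Set.finite_range a).infinite_compl.nonempty
    exact ⟨x, hx⟩
  have forth : ∀ n a b, GoodBF L₂ f n a b → ∀ x ∉ Set.range a,
      ∃ y, GoodBF L₂ f (n+1) (Fin.snoc a x) (Fin.snoc b y) := by
    rintro n a b ⟨hainj, k, hk, rfl⟩ x hx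
    refine ⟨k (f x), snoc_inj hainj hx, k, hk, ?_⟩
    funext i
    rcases Fin.eq_castSucc_or_eq_last i with ⟨i', rfl⟩ | rfl
    · simp [tAct, Fin.snoc_castSucc]
    · simp [tAct, Fin.snoc_last]
  have back : ∀ n a b, GoodBF L₂ f n a b → ∀ y ∉ Set.range b,
      ∃ x ∉ Set.range a, GoodBF L₂ f (n+1) (Fin.snoc a x) (Fin.snoc b y) := by
    rintro n a b ⟨hainj, horb⟩ y hy
    have h1 := hgcan n _ _ horb
    have h2 : SameOrb {g' : Equiv.Perm Ω | IsAutPerm L₁ Ω g'} a (fun i => g (b i)) :=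
      sameOrb_trans (hgf n a) h1
    obtain ⟨h, hh, hab⟩ := sameOrb_symm h2
    set x := h (g y) with hxdef
    have hxa : x ∉ Set.range a := by
      rintro ⟨i, hi⟩
      have h3 : a i = h (g (b i)) := congrFun hab i
      exact hy ⟨i, hginj (h.injective (h3.symm.trans hi))⟩
    refine ⟨x, hxa, snoc_inj hainj hxa, ?_⟩
    have h3 : SameOrb {g' : Equiv.Perm Ω | IsAutPerm L₁ Ω g'}
        (fun i : Fin (n+1) => g ((Fin.snoc b y : Fin (n+1) → Ω) i)) (Fin.snoc a x) := by
      refine ⟨h, hh, ?_⟩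
      funext i
      rcases Fin.eq_castSucc_or_eq_last i with ⟨i', rfl⟩ | rfl
      · simpa [tAct, Fin.snoc_castSucc] using congrFun hab i'
      · simp [tAct, Fin.snoc_last, hxdef]
    have h4 := hfcan (n+1) _ _ h3
    have h5 := hfg (n+1) (Fin.snoc b y)
    exact sameOrb_symm (sameOrb_trans h5 h4)
  have step_ex : ∀ (n : ℕ) (a b : Fin n → Ω), GoodBF L₂ f n a b →
      ∃ (a' b' : Fin (n+1) → Ω), GoodBF L₂ f (n+1) a' b' ∧
        (∀ i : Fin n, a' i.castSucc = a i) ∧ (∀ i : Fin n, b' i.castSucc = b i) ∧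
        (∀ m, n = 2*m → e.symm m ∈ Set.range a') ∧
        (∀ m, n = 2*m+1 → e.symm m ∈ Set.range b') := by
    intro n a b hgood
    rcases Nat.even_or_odd n with ⟨m, hm⟩ | ⟨m, hm⟩
    · by_cases hmem : e.symm m ∈ Set.range a
      · obtain ⟨x, hx⟩ := fresh n a
        obtain ⟨y, hy⟩ := forth n a b hgood x hx
        refine ⟨_, _, hy, fun i => Fin.snoc_castSucc .., fun i => Fin.snoc_castSucc ..,
          ?_, fun m' hm' => by exfalso; omega⟩
        intro m' hm'
        have hmm : m' = m := by omega
        subst hmm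
        obtain ⟨i, hi⟩ := hmem
        exact ⟨i.castSucc, by rw [Fin.snoc_castSucc, hi]⟩
      · obtain ⟨y, hy⟩ := forth n a b hgood (e.symm m) hmem
        refine ⟨_, _, hy, fun i => Fin.snoc_castSucc .., fun i => Fin.snoc_castSucc ..,
          ?_, fun m' hm' => by exfalso; omega⟩
        intro m' hm'
        have hmm : m' = m := by omega
        subst hmm
        exact ⟨Fin.last n, Fin.snoc_last ..⟩
    · by_cases hmem : e.symm m ∈ Set.range b
      · obtain ⟨x, hx⟩ := fresh n a
        obtain ⟨y, hy⟩ := forth n a b hgood x hx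
        refine ⟨_, _, hy, fun i => Fin.snoc_castSucc .., fun i => Fin.snoc_castSucc ..,
          fun m' hm' => by exfalso; omega, ?_⟩
        intro m' hm'
        have hmm : m' = m := by omega
        subst hmm
        obtain ⟨i, hi⟩ := hmem
        exact ⟨i.castSucc, by rw [Fin.snoc_castSucc, hi]⟩
      · obtain ⟨x, hx, hgood'⟩ := back n a b hgood (e.symm m) hmem
        refine ⟨_, _, hgood', fun i => Fin.snoc_castSucc .., fun i => Fin.snoc_castSucc ..,
          fun m' hm' => by exfalso; omega, ?_⟩
        intro m' hm'
        have hmm : m' = m := by omega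
        subst hmm
        exact ⟨Fin.last n, Fin.snoc_last ..⟩
  choose a' b' hgood' hexta hextb hscha hschb using step_ex
  let chain : ∀ n : ℕ, {p : (Fin n → Ω) × (Fin n → Ω) // GoodBF L₂ f n p.1 p.2} :=
    fun n => Nat.rec ⟨(Fin.elim0, Fin.elim0), good0⟩
      (fun k ih => ⟨(a' k ih.1.1 ih.1.2 ih.2, b' k ih.1.1 ih.1.2 ih.2),
        hgood' k ih.1.1 ih.1.2 ih.2⟩) n
  have hca : ∀ (n : ℕ) (i : Fin n), (chain (n+1)).1.1 i.castSucc = (chain n).1.1 i :=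
    fun n i => hexta n (chain n).1.1 (chain n).1.2 (chain n).2 i
  have hcb : ∀ (n : ℕ) (i : Fin n), (chain (n+1)).1.2 i.castSucc = (chain n).1.2 i :=
    fun n i => hextb n (chain n).1.1 (chain n).1.2 (chain n).2 i
  set α : ℕ → Ω := fun k => (chain (k+1)).1.1 (Fin.last k) with hα
  set β : ℕ → Ω := fun k => (chain (k+1)).1.2 (Fin.last k) with hβ
  have hval_a : ∀ (n : ℕ) (i : Fin n), (chain n).1.1 i = α i.val := by
    intro n
    induction n with
    | zero => exact fun i => i.elim0
    | succ k ih =>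
      intro i
      rcases Fin.eq_castSucc_or_eq_last i with ⟨j, rfl⟩ | rfl
      · rw [hca k j, ih j]; rfl
      · rfl
  have hval_b : ∀ (n : ℕ) (i : Fin n), (chain n).1.2 i = β i.val := by
    intro n
    induction n with
    | zero => exact fun i => i.elim0
    | succ k ih =>
      intro i
      rcases Fin.eq_castSucc_or_eq_last i with ⟨j, rfl⟩ | rfl
      · rw [hcb k j, ih j]; rfl
      · rfl
  have hαinj : Function.Injective α := by
    intro k l hkl
    have hk : k < max k l + 1 := by omega
    have hl : l < max k l + 1 := by omega
    have h1 : (chain (max k l + 1)).1.1 ⟨k, hk⟩ = (chain (max k l + 1)).1.1 ⟨l, hl⟩ := by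
      rw [hval_a _ ⟨k, hk⟩, hval_a _ ⟨l, hl⟩]; exact hkl
    have := (chain (max k l + 1)).2.1 h1
    exact congrArg Fin.val this
  have hβinj : Function.Injective β := by
    intro k l hkl
    have hk : k < max k l + 1 := by omega
    have hl : l < max k l + 1 := by omega
    obtain ⟨hinj, kk, hkk, hb⟩ := (chain (max k l + 1)).2
    have h1 : (chain (max k l + 1)).1.2 ⟨k, hk⟩ = (chain (max k l + 1)).1.2 ⟨l, hl⟩ := by
      rw [hval_b _ ⟨k, hk⟩, hval_b _ ⟨l, hl⟩]; exact hkl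
    rw [hb] at h1
    have := hinj (hfinj (kk.injective h1))
    exact congrArg Fin.val this
  have hαsurj : Function.Surjective α := by
    intro z
    have hs := hscha (2 * e z) (chain (2 * e z)).1.1 (chain (2 * e z)).1.2
      (chain (2 * e z)).2 (e z) rfl
    obtain ⟨i, hi⟩ := hs
    refine ⟨i.val, ?_⟩
    have : (chain (2 * e z + 1)).1.1 i = e.symm (e z) := hi
    rw [← hval_a (2 * e z + 1) i, this, Equiv.symm_apply_apply]
  have hβsurj : Function.Surjective β := by
    intro z
    have hs := hschb (2 * e z + 1) (chain (2 * e z + 1)).1.1 (chain (2 * e z + 1)).1.2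
      (chain (2 * e z + 1)).2 (e z) rfl
    obtain ⟨i, hi⟩ := hs
    refine ⟨i.val, ?_⟩
    have : (chain (2 * e z + 1 + 1)).1.2 i = e.symm (e z) := hi
    rw [← hval_b (2 * e z + 1 + 1) i, this, Equiv.symm_apply_apply]
  refine ⟨(Equiv.ofBijective α ⟨hαinj, hαsurj⟩).symm.trans
    (Equiv.ofBijective β ⟨hβinj, hβsurj⟩), ?_⟩
  set θ := (Equiv.ofBijective α ⟨hαinj, hαsurj⟩).symm.trans
    (Equiv.ofBijective β ⟨hβinj, hβsurj⟩) with hθdef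
  have hθ : ∀ k, θ (α k) = β k := by
    intro k
    show (Equiv.ofBijective β ⟨hβinj, hβsurj⟩)
      ((Equiv.ofBijective α ⟨hαinj, hαsurj⟩).symm (α k)) = β k
    rw [show α k = (Equiv.ofBijective α ⟨hαinj, hαsurj⟩) k from rfl,
      Equiv.symm_apply_apply]
    rfl
  intro m t
  choose j hj using fun i => hαsurj (t i)
  set n := Finset.univ.sup j + 1 with hn
  have hjlt : ∀ i, j i < n := fun i => Nat.lt_succ_of_le (Finset.le_sup (Finset.mem_univ i))
  obtain ⟨hinj, kk, hkk, hb⟩ := (chain n).2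
  refine ⟨kk, hkk, ?_⟩
  funext i
  have h1 : (chain n).1.1 ⟨j i, hjlt i⟩ = t i := by
    rw [hval_a]; exact hj i
  have h2 : (chain n).1.2 ⟨j i, hjlt i⟩ = β (j i) := hval_b n _
  have h3 : β (j i) = kk (f (t i)) := by
    rw [← h2, hb]
    show kk (f ((chain n).1.1 ⟨j i, hjlt i⟩)) = kk (f (t i))
    rw [h1]
  show θ (t i) = kk (f (t i))
  rw [← hj i, hθ, h3, hj i]

end Helpers3
section Helpers4

open FirstOrder Language Structure

variable {Ω : Type*} {L₁ L₂ : FirstOrder.Language} [L₁.Structure Ω] [L₂.Structure Ω]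

lemma aut_conj [L₁.IsRelational] [L₂.IsRelational] (θ : Ω ≃ Ω)
    (hbwd : ∀ (n : ℕ) (s : Set (Fin n → Ω)),
      FoDef L₂ Ω s → FoDef L₁ Ω ((fun t => ⇑θ.symm ∘ t) '' s))
    {h : Equiv.Perm Ω} (hh : IsAutPerm L₁ Ω h) :
    IsAutPerm L₂ Ω ((θ.symm.trans (h.trans θ)) : Equiv.Perm Ω) := by
  intro n R u
  have hsR : FoDef L₂ Ω {v : Fin n → Ω | RelMap R v} :=
    ⟨R.formula (fun i => Term.var i), by ext v; simp⟩
  have hs' := hbwd n _ hsR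
  have hinv := invariant_of_foDef hs'
  have hminj : Function.Injective (fun t : Fin n → Ω => ⇑θ.symm ∘ t) := by
    intro t1 t2 h12
    funext i
    exact θ.symm.injective (congrFun h12 i)
  have hmem : ∀ v : Fin n → Ω, RelMap R v ↔
      (⇑θ.symm ∘ v) ∈ ((fun t : Fin n → Ω => ⇑θ.symm ∘ t) '' {v | RelMap R v}) := by
    intro v
    refine ⟨fun hv => ⟨v, hv, rfl⟩, ?_⟩
    rintro ⟨w, hw, hwv⟩
    rwa [← hminj hwv]
  have key : ⇑θ.symm ∘ (⇑(θ.symm.trans (h.trans θ)) ∘ u) = tAct h (⇑θ.symm ∘ u) := by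
    funext i
    simp [tAct, Equiv.trans_apply]
  rw [hmem (⇑(θ.symm.trans (h.trans θ)) ∘ u), hmem u, key]
  constructor
  · intro hm
    have := hinv h⁻¹ (autInv hh) _ hm
    rwa [tAct_mul, inv_mul_cancel, tAct_one] at this
  · exact fun hm => hinv h hh _ hm

lemma canonical_of_bidef [L₁.IsRelational] [L₂.IsRelational] (θ : Ω ≃ Ω)
    (hbwd : ∀ (n : ℕ) (s : Set (Fin n → Ω)),
      FoDef L₂ Ω s → FoDef L₁ Ω ((fun t => ⇑θ.symm ∘ t) '' s)) :
    Canonical {g' : Equiv.Perm Ω | IsAutPerm L₁ Ω g'}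
      {g' : Equiv.Perm Ω | IsAutPerm L₂ Ω g'} ⇑θ := by
  rintro m t t' ⟨h, hh, rfl⟩
  refine ⟨θ.symm.trans (h.trans θ), aut_conj θ hbwd hh, ?_⟩
  funext i
  simp [tAct, Equiv.trans_apply]

end Helpers4
/-- Criterion for two homogeneous ω-categorical structures `A`, `B` to be
fo-bi-definable via an isomorphism between given first-order reducts `C`, `D`
in a common signature `τ`, in terms of canonical functions. -/
theorem foBiDefinable_by_reduct_iso_iff_canonical_functions
    {Ω : Type} [Countable Ω] [Infinite Ω]
    (L₁ L₂ τ : FirstOrder.Language) [L₁.IsRelational] [L₂.IsRelational] [τ.IsRelational]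
    [L₁.Structure Ω] [L₂.Structure Ω]
    (hAhomog : Homog L₁ Ω) (hBhomog : Homog L₂ Ω)
    (hAoligo : Oligo {g : Equiv.Perm Ω | IsAutPerm L₁ Ω g})
    (hBoligo : Oligo {g : Equiv.Perm Ω | IsAutPerm L₂ Ω g})
    (SC SD : τ.Structure Ω)
    -- `C` is a first-order reduct of `A`: each of its relations is a union of `Aut(A)`-orbits
    (hCreduct : ∀ (m : ℕ) (R : τ.Relations m) (g : Equiv.Perm Ω), IsAutPerm L₁ Ω g →
      ∀ t : Fin m → Ω, relI SC R t → relI SC R (tAct g t))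
    -- `D` is a first-order reduct of `B`
    (hDreduct : ∀ (m : ℕ) (R : τ.Relations m) (g : Equiv.Perm Ω), IsAutPerm L₂ Ω g →
      ∀ t : Fin m → Ω, relI SD R t → relI SD R (tAct g t)) :
    -- (1) some isomorphism `C → D` is a fo-bi-definition of `A` and `B`
    ((∃ θ : Ω ≃ Ω,
        (∀ (m : ℕ) (R : τ.Relations m) (t : Fin m → Ω),
          relI SC R t ↔ relI SD R (fun i => θ (t i))) ∧
        (∀ (n : ℕ) (s : Set (Fin n → Ω)),
          FoDef L₁ Ω s → FoDef L₂ Ω ((fun t => ⇑θ ∘ t) '' s)) ∧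
        (∀ (n : ℕ) (s : Set (Fin n → Ω)),
          FoDef L₂ Ω s → FoDef L₁ Ω ((fun t => ⇑θ.symm ∘ t) '' s)))
      ↔
    -- (2) there are injective canonical functions as in the criterion
      (∃ f g : Ω → Ω, Function.Injective f ∧ Function.Injective g ∧
        -- (i) `f` is (A,B)-canonical
        Canonical {g' : Equiv.Perm Ω | IsAutPerm L₁ Ω g'}
          {g' : Equiv.Perm Ω | IsAutPerm L₂ Ω g'} f ∧
        -- (ii) `g` is (B,A)-canonical
        Canonical {g' : Equiv.Perm Ω | IsAutPerm L₂ Ω g'}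
          {g' : Equiv.Perm Ω | IsAutPerm L₁ Ω g'} g ∧
        -- (iii) `g ∘ f` preserves all orbits of `A`
        (∀ (m : ℕ) (t : Fin m → Ω),
          SameOrb {g' : Equiv.Perm Ω | IsAutPerm L₁ Ω g'} t (fun i => g (f (t i)))) ∧
        -- (iv) `f ∘ g` preserves all orbits of `B`
        (∀ (m : ℕ) (t : Fin m → Ω),
          SameOrb {g' : Equiv.Perm Ω | IsAutPerm L₂ Ω g'} t (fun i => f (g (t i)))) ∧
        -- (v) `f` takes `A`-orbits in `R^C` to `B`-orbits in `R^D`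
        (∀ (m : ℕ) (R : τ.Relations m) (t : Fin m → Ω),
          relI SC R t → relI SD R (fun i => f (t i))) ∧
        -- (vi) `g` takes `B`-orbits in `R^D` to `A`-orbits in `R^C`
        (∀ (m : ℕ) (R : τ.Relations m) (t : Fin m → Ω),
          relI SD R t → relI SC R (fun i => g (t i))))) := by
  classical
  constructor
  · rintro ⟨θ, hiso, hfwd, hbwd⟩
    have hfcan := canonical_of_bidef (L₁ := L₁) (L₂ := L₂) θ hbwd
    have hgcan := canonical_of_bidef (L₁ := L₂) (L₂ := L₁) θ.symm
      (fun n s hs => by simpa using hfwd n s hs)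
    refine ⟨⇑θ, ⇑θ.symm, θ.injective, θ.symm.injective, hfcan, hgcan, ?_, ?_, ?_, ?_⟩
    · intro m t
      refine ⟨1, autOne, ?_⟩
      funext i
      simp [tAct]
    · intro m t
      refine ⟨1, autOne, ?_⟩
      funext i
      simp [tAct]
    · exact fun m R t ht => (hiso m R t).1 ht
    · intro m R t ht
      have h2 := (hiso m R (fun i => θ.symm (t i))).2
      simp only [Equiv.apply_symm_apply] at h2
      exact h2 ht
  · rintro ⟨f, g, hfinj, hginj, hfcan, hgcan, hgf, hfg, hfC, hgD⟩
    obtain ⟨θ, hθ⟩ := exists_theta f g hfinj hginj hfcan hgcan hgf hfg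
    have hθ' : ∀ (m : ℕ) (u : Fin m → Ω),
        SameOrb {g' : Equiv.Perm Ω | IsAutPerm L₁ Ω g'}
          (fun i => g (u i)) (fun i => θ.symm (u i)) := by
      intro m u
      have h1 := hθ m (fun i => θ.symm (u i))
      have h2 : (fun i => θ (θ.symm (u i))) = u := by funext i; simp
      rw [h2] at h1
      have h3 := hgcan m _ _ h1
      have h4 := hgf m (fun i => θ.symm (u i))
      exact sameOrb_symm (sameOrb_trans h4 h3)
    refine ⟨θ, ?_, ?_, ?_⟩
    · intro m R t
      constructor
      · intro ht
        obtain ⟨k, hk, hkt⟩ := hθ m t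
        rw [hkt]
        exact hDreduct m R k hk _ (hfC m R t ht)
      · intro ht
        obtain ⟨h, hh, hht⟩ := hθ' m (fun i => θ (t i))
        have h2 : (fun i => θ.symm (θ (t i))) = t := by funext i; simp
        rw [h2] at hht
        rw [hht]
        exact hCreduct m R h hh _ (hgD m R _ ht)
    · intro n s hs
      apply foDef_of_invariant hBhomog hBoligo
      rintro k hk u ⟨t, ht, rfl⟩
      refine ⟨fun i => θ.symm (k (θ (t i))), ?_, ?_⟩
      · have hsinv := invariant_of_foDef hs
        have h1 := hθ' n (tAct k (fun i => θ (t i)))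
        have h2 : SameOrb {g' : Equiv.Perm Ω | IsAutPerm L₂ Ω g'}
            (fun i => f (t i)) (tAct k (fun i => θ (t i))) :=
          sameOrb_trans (hθ n t) ⟨k, hk, rfl⟩
        have h3 := hgcan n _ _ h2
        have h4 := hgf n t
        have h5 := sameOrb_trans (sameOrb_trans h4 h3) h1
        obtain ⟨h, hh, hht⟩ := h5
        have h6 : (fun i => θ.symm (k (θ (t i)))) = tAct h t := hht
        rw [h6]
        exact hsinv h hh t ht
      · funext i
        simp [tAct]
    · intro n s hs
      apply foDef_of_invariant hAhomog hAoligo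
      rintro h hh u ⟨v, hv, rfl⟩
      refine ⟨fun i => θ (h (θ.symm (v i))), ?_, ?_⟩
      · have hsinv := invariant_of_foDef hs
        have h1 := hθ n (fun i => θ.symm (v i))
        have h2 : (fun i => θ (θ.symm (v i))) = v := by funext i; simp
        rw [h2] at h1
        have h3 : SameOrb {g' : Equiv.Perm Ω | IsAutPerm L₁ Ω g'}
            (fun i => θ.symm (v i)) (tAct h (fun i => θ.symm (v i))) := ⟨h, hh, rfl⟩
        have h4 := hfcan n _ _ h3
        have h5 := hθ n (tAct h (fun i => θ.symm (v i)))
        have h6 := sameOrb_trans (sameOrb_trans (sameOrb_symm h1) h4) h5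
        obtain ⟨kk, hkk, hv'⟩ := h6
        have h7 : (fun i => θ (h (θ.symm (v i)))) = tAct kk v := hv'
        rw [h7]
        exact hsinv kk hkk v hv
      · funext i
        simp [tAct]
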